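/- Fix ε > 0 and x₀ ∈ ℝ, and let u be five times continuously differentiable on a neighborhood of x₀. For h > 0 define A(h) = 2ε²h·e^{3ε²h²}·(e^{4ε²h²} − 1 − 4ε²h²)/(e^{8ε²h²} − 1 − 8ε²h²·e^{4ε²h²}) and B(h) = e^{ε²h²}·(2ε²h²·cosh(2ε²h²) − sinh(2ε²h²))/(4ε²h² − sinh(4ε²h²)). Then, as h → 0⁺, A(h)·(u(x₀+h) − u(x₀−h)) + B(h)·(u'(x₀−h) + u'(x₀+h)) − u'(x₀) = −(h⁴/120)·(60ε⁴·u'(x₀) + 20ε²·u'''(x₀) + u⁽⁵⁾(x₀)) + o(h⁴). -/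

import Mathlib

open Filter Topology Asymptotics

set_option maxHeartbeats 3200000
set_option maxRecDepth 8000

private lemma cO1 {f : ℝ → ℝ} (hf : Continuous f) :
    f =O[𝓝[>] (0:ℝ)] (fun _ => (1:ℝ)) :=
  ((hf.tendsto 0).mono_left nhdsWithin_le_nhds).isBigO_one ℝ

private lemma mulO {n : ℕ} {f g : ℝ → ℝ} (hf : Continuous f)
    (hg : g =O[𝓝[>] (0:ℝ)] fun h => h ^ n) :
    (fun h => f h * g h) =O[𝓝[>] (0:ℝ)] fun h => h ^ n := by
  simpa using (cO1 hf).mul hg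

private lemma exp_taylor6 : (fun x : ℝ => Real.exp x -
    (1 + x + x^2/2 + x^3/6 + x^4/24 + x^5/120)) =O[𝓝 (0:ℝ)] fun x => x ^ 6 := by
  rw [Asymptotics.isBigO_iff]
  refine ⟨7 / (720 * 6), ?_⟩
  have h1 : ∀ᶠ x : ℝ in 𝓝 0, |x| ≤ 1 := by
    have h2 : Set.Icc (-1:ℝ) 1 ∈ 𝓝 (0:ℝ) := Icc_mem_nhds (by norm_num) (by norm_num)
    filter_upwards [h2] with x hx
    exact abs_le.mpr ⟨hx.1, hx.2⟩
  filter_upwards [h1] with x hx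
  have hb := Real.exp_bound hx (n := 6) (by norm_num)
  have hs : ∑ m ∈ Finset.range 6, x ^ m / (m.factorial : ℝ)
      = 1 + x + x^2/2 + x^3/6 + x^4/24 + x^5/120 := by
    simp [Finset.sum_range_succ, Nat.factorial]
  rw [hs] at hb
  simp only [Real.norm_eq_abs, abs_pow]
  calc |Real.exp x - (1 + x + x^2/2 + x^3/6 + x^4/24 + x^5/120)|
      ≤ |x| ^ 6 * ((6:ℕ).succ / ((6:ℕ).factorial * 6)) := hb
    _ = 7 / (720 * 6) * |x| ^ 6 := by norm_num [Nat.factorial]; ring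

private lemma exp_taylor4 : (fun x : ℝ => Real.exp x -
    (1 + x + x^2/2 + x^3/6)) =O[𝓝 (0:ℝ)] fun x => x ^ 4 := by
  rw [Asymptotics.isBigO_iff]
  refine ⟨5 / (24 * 4), ?_⟩
  have h1 : ∀ᶠ x : ℝ in 𝓝 0, |x| ≤ 1 := by
    have h2 : Set.Icc (-1:ℝ) 1 ∈ 𝓝 (0:ℝ) := Icc_mem_nhds (by norm_num) (by norm_num)
    filter_upwards [h2] with x hx
    exact abs_le.mpr ⟨hx.1, hx.2⟩
  filter_upwards [h1] with x hx
  have hb := Real.exp_bound hx (n := 4) (by norm_num)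
  have hs : ∑ m ∈ Finset.range 4, x ^ m / (m.factorial : ℝ)
      = 1 + x + x^2/2 + x^3/6 := by
    simp [Finset.sum_range_succ, Nat.factorial]
  rw [hs] at hb
  simp only [Real.norm_eq_abs, abs_pow]
  calc |Real.exp x - (1 + x + x^2/2 + x^3/6)|
      ≤ |x| ^ 4 * ((4:ℕ).succ / ((4:ℕ).factorial * 4)) := hb
    _ = 5 / (24 * 4) * |x| ^ 4 := by norm_num [Nat.factorial]; ring

private lemma exp_approx6 {v : ℝ → ℝ} (hv : Tendsto v (𝓝[>] (0:ℝ)) (𝓝 0))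
    (hO : v =O[𝓝[>] (0:ℝ)] fun h => h ^ 2) :
    (fun h => Real.exp (v h) -
      (1 + v h + (v h)^2/2 + (v h)^3/6 + (v h)^4/24 + (v h)^5/120))
      =O[𝓝[>] (0:ℝ)] fun h => h ^ 12 := by
  have h1 := exp_taylor6.comp_tendsto hv
  have h2 : (fun h => (v h) ^ 6) =O[𝓝[>] (0:ℝ)] fun h => ((fun h:ℝ => h ^ 2) h) ^ 6 := hO.pow 6
  have h3 := h1.trans h2
  refine h3.congr' (EventuallyEq.of_eq rfl) (EventuallyEq.of_eq (funext fun h => by ring))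

private lemma exp_approx4 {v : ℝ → ℝ} (hv : Tendsto v (𝓝[>] (0:ℝ)) (𝓝 0))
    (hO : v =O[𝓝[>] (0:ℝ)] fun h => h ^ 2) :
    (fun h => Real.exp (v h) - (1 + v h + (v h)^2/2 + (v h)^3/6))
      =O[𝓝[>] (0:ℝ)] fun h => h ^ 8 := by
  have h1 := exp_taylor4.comp_tendsto hv
  have h2 : (fun h => (v h) ^ 4) =O[𝓝[>] (0:ℝ)] fun h => ((fun h:ℝ => h ^ 2) h) ^ 4 := hO.pow 4
  have h3 := h1.trans h2
  refine h3.congr' (EventuallyEq.of_eq rfl) (EventuallyEq.of_eq (funext fun h => by ring))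

private lemma taylor_peano (n : ℕ) (f : ℝ → ℝ) (a : ℝ) (s : Set ℝ)
    (hso : IsOpen s) (ha : a ∈ s) (hf : ContDiffOn ℝ n f s) :
    (fun h : ℝ => f (a + h) -
      ∑ k ∈ Finset.range (n + 1), iteratedDeriv k f a * h ^ k / (k.factorial : ℝ))
      =o[𝓝 (0:ℝ)] fun h => h ^ n := by
  induction n generalizing f with
  | zero =>
    have hc : ContinuousAt f a := hf.continuousOn.continuousAt (hso.mem_nhds ha)
    have ht : Tendsto (fun h : ℝ => f (a + h)) (𝓝 0) (𝓝 (f a)) := by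
      have h0 : Tendsto (fun h : ℝ => a + h) (𝓝 0) (𝓝 a) := by
        simpa using (tendsto_id (x := 𝓝 (0:ℝ))).const_add a
      exact hc.tendsto.comp h0
    have ht2 : Tendsto (fun h : ℝ => f (a + h) - f a) (𝓝 0) (𝓝 0) := by
      simpa using ht.sub_const (f a)
    simp only [zero_add, Finset.sum_range_one, iteratedDeriv_zero, pow_zero, mul_one,
      Nat.factorial_zero, Nat.cast_one, div_one]
    exact (isLittleO_one_iff ℝ).mpr ht2
  | succ n IH =>
    have hone : (1 : WithTop ℕ∞) ≤ (n + 1 : ℕ) := by exact_mod_cast Nat.succ_le_succ (Nat.zero_le n)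
    have hdf : ContDiffOn ℝ n (deriv f) s :=
      hf.deriv_of_isOpen hso (by exact_mod_cast le_refl (n + 1))
    have hG0 := IH (deriv f) hdf
    -- rewrite iterated derivatives of deriv f
    have hiter : ∀ k : ℕ, iteratedDeriv k (deriv f) a = iteratedDeriv (k + 1) f a := by
      intro k; rw [iteratedDeriv_succ']
    have hG : (fun h : ℝ => deriv f (a + h) -
        ∑ k ∈ Finset.range (n + 1), iteratedDeriv (k + 1) f a * h ^ k / (k.factorial : ℝ))
        =o[𝓝 (0:ℝ)] fun h => h ^ n := by
      refine hG0.congr' (EventuallyEq.of_eq (funext fun h => ?_)) (EventuallyEq.of_eq rfl)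
      congr 1
      exact Finset.sum_congr rfl fun k _ => by rw [hiter]
    set R : ℝ → ℝ := fun h => f (a + h) -
      ∑ k ∈ Finset.range (n + 2), iteratedDeriv k f a * h ^ k / (k.factorial : ℝ) with hR
    set G : ℝ → ℝ := fun h => deriv f (a + h) -
      ∑ k ∈ Finset.range (n + 1), iteratedDeriv (k + 1) f a * h ^ k / (k.factorial : ℝ) with hGdef
    have hderiv : ∀ x : ℝ, a + x ∈ s → HasDerivAt R (G x) x := by
      intro x hx
      have hfd : DifferentiableAt ℝ f (a + x) :=
        (hf.differentiableOn (by exact_mod_cast n.succ_ne_zero)).differentiableAt (hso.mem_nhds hx)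
      have h1 : HasDerivAt (fun h : ℝ => f (a + h)) (deriv f (a + x)) x := by
        simpa [Function.comp_def] using hfd.hasDerivAt.comp x ((hasDerivAt_id x).const_add a)
      have h2 : HasDerivAt (fun h : ℝ =>
          ∑ k ∈ Finset.range (n + 2), iteratedDeriv k f a * h ^ k / (k.factorial : ℝ))
          (∑ k ∈ Finset.range (n + 1), iteratedDeriv (k + 1) f a * x ^ k / (k.factorial : ℝ)) x := by
        have hterm : ∀ k ∈ Finset.range (n + 2),
            HasDerivAt (fun h : ℝ => iteratedDeriv k f a * h ^ k / (k.factorial : ℝ))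
              (iteratedDeriv k f a * ((k : ℝ) * x ^ (k - 1)) / (k.factorial : ℝ)) x := by
          intro k _
          exact ((hasDerivAt_pow k x).const_mul (iteratedDeriv k f a)).div_const _
        have hsum := HasDerivAt.fun_sum hterm
        have heq : ∑ k ∈ Finset.range (n + 2),
            iteratedDeriv k f a * ((k : ℝ) * x ^ (k - 1)) / (k.factorial : ℝ)
            = ∑ k ∈ Finset.range (n + 1), iteratedDeriv (k + 1) f a * x ^ k / (k.factorial : ℝ) := by
          rw [Finset.sum_range_succ']
          simp only [Nat.cast_zero, zero_mul, mul_zero, zero_div, add_zero]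
          refine Finset.sum_congr rfl fun k _ => ?_
          have hk1 : ((k + 1 : ℕ) : ℝ) ≠ 0 := Nat.cast_ne_zero.mpr k.succ_ne_zero
          have hkf : ((k.factorial : ℕ) : ℝ) ≠ 0 := Nat.cast_ne_zero.mpr k.factorial_ne_zero
          rw [Nat.factorial_succ]
          push_cast
          field_simp
        rw [← heq]
        exact hsum
      exact h1.sub h2
    have hR0 : R 0 = 0 := by
      simp only [hR, Finset.sum_range_succ']
      simp
    rw [isLittleO_iff]
    intro C hC
    have hmem : ∀ᶠ h : ℝ in 𝓝 0, a + h ∈ s := by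
      have htt : Tendsto (fun h : ℝ => a + h) (𝓝 0) (𝓝 a) := by
        simpa using (tendsto_id (x := 𝓝 (0:ℝ))).const_add a
      exact htt (hso.mem_nhds ha)
    have hev := (hG.def hC).and hmem
    rw [Metric.eventually_nhds_iff] at hev
    obtain ⟨δ, hδ, hball⟩ := hev
    rw [Metric.eventually_nhds_iff]
    refine ⟨δ, hδ, fun h hh => ?_⟩
    rw [Real.dist_eq, sub_zero] at hh
    have habs : ∀ x ∈ Set.uIcc (0:ℝ) h, |x| ≤ |h| := by
      intro x hx
      rcases Set.mem_uIcc.mp hx with ⟨h1, h2⟩ | ⟨h1, h2⟩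
      · rw [abs_of_nonneg h1]; exact le_trans h2 (le_abs_self h)
      · rw [abs_of_nonpos h2]; exact le_trans (neg_le_neg h1) (neg_le_abs h)
    have hball' : ∀ x ∈ Set.uIcc (0:ℝ) h,
        ‖G x‖ ≤ C * ‖x ^ n‖ ∧ a + x ∈ s := by
      intro x hx
      refine hball ?_
      rw [Real.dist_eq, sub_zero]
      exact lt_of_le_of_lt (habs x hx) hh
    have hmvt := Convex.norm_image_sub_le_of_norm_hasDerivWithin_le
      (f := R) (f' := G) (s := Set.uIcc (0:ℝ) h) (C := C * |h| ^ n)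
      (fun x hx => (hderiv x (hball' x hx).2).hasDerivWithinAt)
      (fun x hx => by
        refine le_trans (hball' x hx).1 ?_
        simp only [Real.norm_eq_abs, abs_pow]
        exact mul_le_mul_of_nonneg_left (pow_le_pow_left₀ (abs_nonneg x) (habs x hx) n) hC.le)
      (convex_uIcc _ _) Set.left_mem_uIcc Set.right_mem_uIcc
    rw [hR0, sub_zero, sub_zero] at hmvt
    calc ‖R h‖ ≤ C * |h| ^ n * ‖h‖ := hmvt
      _ = C * ‖h ^ (n + 1)‖ := by
          simp only [Real.norm_eq_abs, abs_pow, pow_succ, abs_mul]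
          ring

private lemma h_pos_ne : ∀ᶠ h : ℝ in 𝓝[>] (0:ℝ), h ≠ 0 := by
  filter_upwards [self_mem_nhdsWithin] with h hh
  exact ne_of_gt hh

private lemma hpow_littleO {m n : ℕ} (hmn : m < n) :
    (fun h : ℝ => h ^ n) =o[𝓝[>] (0:ℝ)] fun h => h ^ m :=
  (isLittleO_pow_pow hmn).mono nhdsWithin_le_nhds

private lemma hpow_O1 (n : ℕ) : (fun h : ℝ => h ^ n) =O[𝓝[>] (0:ℝ)] (fun _ => (1:ℝ)) :=
  (((continuous_pow n).tendsto (0:ℝ)).mono_left nhdsWithin_le_nhds).isBigO_one ℝ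

/-- From a big-O expansion, get the limit of `D h / h ^ m`. -/
private lemma tendsto_div_pow {D : ℝ → ℝ} {c : ℝ} {m k : ℕ} (hk : 0 < k)
    (hD : (fun h => D h - c * h ^ m) =O[𝓝[>] (0:ℝ)] fun h => h ^ (m + k)) :
    Tendsto (fun h => D h / h ^ m) (𝓝[>] (0:ℝ)) (𝓝 c) := by
  have h1 : (fun h => D h / h ^ m - c) =O[𝓝[>] (0:ℝ)] fun h => h ^ k := by
    have h2 := hD.mul (isBigO_refl (fun h : ℝ => (h ^ m)⁻¹) (𝓝[>] (0:ℝ)))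
    refine h2.congr' ?_ ?_
    · filter_upwards [h_pos_ne] with h hh
      have hm : (h:ℝ) ^ m ≠ 0 := pow_ne_zero _ hh
      field_simp
    · filter_upwards [h_pos_ne] with h hh
      have hm : (h:ℝ) ^ m ≠ 0 := pow_ne_zero _ hh
      field_simp
      ring
  have h3 : Tendsto (fun h : ℝ => h ^ k) (𝓝[>] (0:ℝ)) (𝓝 0) := by
    have := ((continuous_pow k).tendsto (0:ℝ)).mono_left (nhdsWithin_le_nhds (s := Set.Ioi 0))
    simpa [zero_pow hk.ne'] using this
  have h4 : Tendsto (fun h => D h / h ^ m - c) (𝓝[>] (0:ℝ)) (𝓝 0) := h1.trans_tendsto h3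
  have h5 := h4.add_const c
  simpa using h5

private lemma quotO {F D : ℝ → ℝ} {c : ℝ} (hc : c ≠ 0)
    (hF : F =O[𝓝[>] (0:ℝ)] fun h => h ^ 12)
    (hD : Tendsto (fun h => D h / h ^ 6) (𝓝[>] (0:ℝ)) (𝓝 c)) :
    (fun h => F h / D h) =O[𝓝[>] (0:ℝ)] fun h => h ^ 6 := by
  have hinv : Tendsto (fun h => h ^ 6 / D h) (𝓝[>] (0:ℝ)) (𝓝 c⁻¹) := by
    have := hD.inv₀ hc
    simpa [inv_div] using this
  have h1 : (fun h => h ^ 6 / D h) =O[𝓝[>] (0:ℝ)] (fun _ => (1:ℝ)) := hinv.isBigO_one ℝ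
  have h2 := (hF.mul (isBigO_refl (fun h : ℝ => (h ^ 6)⁻¹) (𝓝[>] (0:ℝ)))).mul h1
  refine h2.congr' ?_ ?_
  · filter_upwards [h_pos_ne] with h hh
    have h6 : (h:ℝ) ^ 6 ≠ 0 := pow_ne_zero _ hh
    rcases eq_or_ne (D h) 0 with hD0 | hD0
    · simp [hD0]
    · field_simp
  · filter_upwards [h_pos_ne] with h hh
    have h6 : (h:ℝ) ^ 6 ≠ 0 := pow_ne_zero _ hh
    field_simp

private lemma targ (c : ℝ) : Filter.Tendsto (fun h : ℝ => c * h ^ 2) (𝓝[>] (0:ℝ)) (𝓝 0) := by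
  have hc : Continuous (fun h : ℝ => c * h ^ 2) := by fun_prop
  simpa using (hc.tendsto 0).mono_left nhdsWithin_le_nhds

private lemma Oarg (c : ℝ) : (fun h : ℝ => c * h ^ 2) =O[𝓝[>] (0:ℝ)] fun h => h ^ 2 := by
  simpa using (isBigO_refl (fun h : ℝ => h ^ 2) (𝓝[>] (0:ℝ))).const_mul_left c

private lemma targN (c : ℝ) : Filter.Tendsto (fun h : ℝ => -(c * h ^ 2)) (𝓝[>] (0:ℝ)) (𝓝 0) := by
  simpa using (targ c).neg

private lemma OargN (c : ℝ) : (fun h : ℝ => -(c * h ^ 2)) =O[𝓝[>] (0:ℝ)] fun h => h ^ 2 :=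
  (Oarg c).neg_left


/-- Leading-order local truncation error of the fourth-order Gaussian RBF-HFD
formula for the first derivative, as `h → 0⁺`. -/
theorem gaussian_rbf_hfd4_first_deriv_lte (ε x₀ : ℝ) (hε : 0 < ε) (u : ℝ → ℝ)
    (s : Set ℝ) (hs : s ∈ 𝓝 x₀) (hu : ContDiffOn ℝ 5 u s) :
    (fun h : ℝ =>
        (2 * ε ^ 2 * h * Real.exp (3 * ε ^ 2 * h ^ 2) *
            (Real.exp (4 * ε ^ 2 * h ^ 2) - 1 - 4 * ε ^ 2 * h ^ 2) /
            (Real.exp (8 * ε ^ 2 * h ^ 2) - 1 -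
              8 * ε ^ 2 * h ^ 2 * Real.exp (4 * ε ^ 2 * h ^ 2))) *
          (u (x₀ + h) - u (x₀ - h)) +
        (Real.exp (ε ^ 2 * h ^ 2) *
            (2 * ε ^ 2 * h ^ 2 * Real.cosh (2 * ε ^ 2 * h ^ 2) -
              Real.sinh (2 * ε ^ 2 * h ^ 2)) /
            (4 * ε ^ 2 * h ^ 2 - Real.sinh (4 * ε ^ 2 * h ^ 2))) *
          (deriv u (x₀ - h) + deriv u (x₀ + h)) -
        deriv u x₀ -
        (-(h ^ 4 / 120) *
          (60 * ε ^ 4 * deriv u x₀ + 20 * ε ^ 2 * iteratedDeriv 3 u x₀ +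
            iteratedDeriv 5 u x₀)))
      =o[𝓝[>] 0] fun h : ℝ => h ^ 4 := by
  -- exp expansions, order 6 (error O(h^12))
  have e3 : (fun h : ℝ => (Real.exp (3*ε^2*h^2) - (1 + 3*ε^2*h^2 + (3*ε^2*h^2)^2/2 + (3*ε^2*h^2)^3/6 + (3*ε^2*h^2)^4/24 + (3*ε^2*h^2)^5/120))) =O[𝓝[>] (0:ℝ)] fun h => h ^ 12 :=
    exp_approx6 (targ (3*ε^2)) (Oarg (3*ε^2))
  have e4 : (fun h : ℝ => (Real.exp (4*ε^2*h^2) - (1 + 4*ε^2*h^2 + (4*ε^2*h^2)^2/2 + (4*ε^2*h^2)^3/6 + (4*ε^2*h^2)^4/24 + (4*ε^2*h^2)^5/120))) =O[𝓝[>] (0:ℝ)] fun h => h ^ 12 :=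
    exp_approx6 (targ (4*ε^2)) (Oarg (4*ε^2))
  have e8 : (fun h : ℝ => (Real.exp (8*ε^2*h^2) - (1 + 8*ε^2*h^2 + (8*ε^2*h^2)^2/2 + (8*ε^2*h^2)^3/6 + (8*ε^2*h^2)^4/24 + (8*ε^2*h^2)^5/120))) =O[𝓝[>] (0:ℝ)] fun h => h ^ 12 :=
    exp_approx6 (targ (8*ε^2)) (Oarg (8*ε^2))
  have e1 : (fun h : ℝ => (Real.exp (ε^2*h^2) - (1 + ε^2*h^2 + (ε^2*h^2)^2/2 + (ε^2*h^2)^3/6 + (ε^2*h^2)^4/24 + (ε^2*h^2)^5/120))) =O[𝓝[>] (0:ℝ)] fun h => h ^ 12 :=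
    exp_approx6 (targ (ε^2)) (Oarg (ε^2))
  have e2 : (fun h : ℝ => (Real.exp (2*ε^2*h^2) - (1 + 2*ε^2*h^2 + (2*ε^2*h^2)^2/2 + (2*ε^2*h^2)^3/6 + (2*ε^2*h^2)^4/24 + (2*ε^2*h^2)^5/120))) =O[𝓝[>] (0:ℝ)] fun h => h ^ 12 :=
    exp_approx6 (targ (2*ε^2)) (Oarg (2*ε^2))
  have e2n : (fun h : ℝ => (Real.exp (-(2*ε^2*h^2)) - (1 + -(2*ε^2*h^2) + (-(2*ε^2*h^2))^2/2 + (-(2*ε^2*h^2))^3/6 + (-(2*ε^2*h^2))^4/24 + (-(2*ε^2*h^2))^5/120))) =O[𝓝[>] (0:ℝ)] fun h => h ^ 12 :=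
    exp_approx6 (targN (2*ε^2)) (OargN (2*ε^2))
  -- order 4 expansions (error O(h^8))
  have f4 : (fun h : ℝ => (Real.exp (4*ε^2*h^2) - (1 + 4*ε^2*h^2 + (4*ε^2*h^2)^2/2 + (4*ε^2*h^2)^3/6))) =O[𝓝[>] (0:ℝ)] fun h => h ^ 8 :=
    exp_approx4 (targ (4*ε^2)) (Oarg (4*ε^2))
  have f4n : (fun h : ℝ => (Real.exp (-(4*ε^2*h^2)) - (1 + -(4*ε^2*h^2) + (-(4*ε^2*h^2))^2/2 + (-(4*ε^2*h^2))^3/6))) =O[𝓝[>] (0:ℝ)] fun h => h ^ 8 :=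
    exp_approx4 (targN (4*ε^2)) (OargN (4*ε^2))
  have f4n6 : (fun h : ℝ => (Real.exp (-(4*ε^2*h^2)) - (1 + -(4*ε^2*h^2) + (-(4*ε^2*h^2))^2/2 + (-(4*ε^2*h^2))^3/6 + (-(4*ε^2*h^2))^4/24 + (-(4*ε^2*h^2))^5/120))) =O[𝓝[>] (0:ℝ)] fun h => h ^ 12 :=
    exp_approx6 (targN (4*ε^2)) (OargN (4*ε^2))
  have f8 : (fun h : ℝ => (Real.exp (8*ε^2*h^2) - (1 + 8*ε^2*h^2 + (8*ε^2*h^2)^2/2 + (8*ε^2*h^2)^3/6))) =O[𝓝[>] (0:ℝ)] fun h => h ^ 8 :=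
    exp_approx4 (targ (8*ε^2)) (Oarg (8*ε^2))
  -- denominator limits
  have hDA8 : (fun h : ℝ => (Real.exp (8*ε^2*h^2) - 1 - 8*ε^2*h^2*Real.exp (4*ε^2*h^2)) - (64/3*ε^6)*h^6) =O[𝓝[>] (0:ℝ)] fun h => h ^ 8 := by
    have comb := (f8.sub (mulO (f := fun h : ℝ => 8*ε^2*h^2) (by fun_prop) f4)).add
      ((isBigO_refl (fun h : ℝ => h ^ 8) (𝓝[>] (0:ℝ))).const_mul_left (-(256/3)*ε^8))
    refine comb.congr' (Filter.EventuallyEq.of_eq (funext fun h => by ring))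
      (Filter.EventuallyEq.of_eq rfl)
  have htDA : Filter.Tendsto (fun h : ℝ => (Real.exp (8*ε^2*h^2) - 1 - 8*ε^2*h^2*Real.exp (4*ε^2*h^2)) / h^6) (𝓝[>] (0:ℝ)) (𝓝 (64/3*ε^6)) :=
    tendsto_div_pow (m := 6) (k := 2) (by norm_num) hDA8
  have hcA : (64/3*ε^6 : ℝ) ≠ 0 := by positivity
  have hDB8 : (fun h : ℝ => (4*ε^2*h^2 - (Real.exp (4*ε^2*h^2) - Real.exp (-(4*ε^2*h^2)))/2) - (-(32/3)*ε^6)*h^6) =O[𝓝[>] (0:ℝ)] fun h => h ^ 8 := by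
    have comb := (f4.const_mul_left (-(1/2):ℝ)).add (f4n.const_mul_left ((1/2):ℝ))
    refine comb.congr' (Filter.EventuallyEq.of_eq (funext fun h => by ring))
      (Filter.EventuallyEq.of_eq rfl)
  have htDB : Filter.Tendsto (fun h : ℝ => (4*ε^2*h^2 - (Real.exp (4*ε^2*h^2) - Real.exp (-(4*ε^2*h^2)))/2) / h^6) (𝓝[>] (0:ℝ)) (𝓝 (-(32/3)*ε^6)) :=
    tendsto_div_pow (m := 6) (k := 2) (by norm_num) hDB8
  have hcB : (-(32/3)*ε^6 : ℝ) ≠ 0 := by positivity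
  -- numerator combinations are O(h^12)
  have hFA : (fun h : ℝ => 2*ε^2*h*Real.exp (3*ε^2*h^2)*(Real.exp (4*ε^2*h^2) - 1 - 4*ε^2*h^2)*h - (3/4 + ε^2*h^2/4 - 9*(ε^2*h^2)^2/40)*(Real.exp (8*ε^2*h^2) - 1 - 8*ε^2*h^2*Real.exp (4*ε^2*h^2))) =O[𝓝[>] (0:ℝ)] fun h => h ^ 12 := by
    have T1 : (fun h : ℝ => (ε^12*(4088/15 + 26738/75*(ε^2*h^2) + 6546/25*(ε^2*h^2)^2 + 192*(ε^2*h^2)^3 + 504/5*(ε^2*h^2)^4 + 864/25*(ε^2*h^2)^5)) * h^12) =O[𝓝[>] (0:ℝ)] fun h => h ^ 12 :=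
      mulO (by fun_prop) (isBigO_refl _ _)
    have T2 : (fun h : ℝ => (2*(ε^2*h^2)*(Real.exp (4*ε^2*h^2) - 1 - 4*(ε^2*h^2))) * (Real.exp (3*ε^2*h^2) - (1 + 3*ε^2*h^2 + (3*ε^2*h^2)^2/2 + (3*ε^2*h^2)^3/6 + (3*ε^2*h^2)^4/24 + (3*ε^2*h^2)^5/120))) =O[𝓝[>] (0:ℝ)] fun h => h ^ 12 :=
      mulO (by fun_prop) e3
    have T3 : (fun h : ℝ => (2*(ε^2*h^2)*(1 + 3*ε^2*h^2 + (3*ε^2*h^2)^2/2 + (3*ε^2*h^2)^3/6 + (3*ε^2*h^2)^4/24 + (3*ε^2*h^2)^5/120) + 8*(ε^2*h^2)*(3/4 + ε^2*h^2/4 - 9*(ε^2*h^2)^2/40)) * (Real.exp (4*ε^2*h^2) - (1 + 4*ε^2*h^2 + (4*ε^2*h^2)^2/2 + (4*ε^2*h^2)^3/6 + (4*ε^2*h^2)^4/24 + (4*ε^2*h^2)^5/120))) =O[𝓝[>] (0:ℝ)] fun h => h ^ 12 :=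
      mulO (by fun_prop) e4
    have T4 : (fun h : ℝ => (-(3/4 + ε^2*h^2/4 - 9*(ε^2*h^2)^2/40)) * (Real.exp (8*ε^2*h^2) - (1 + 8*ε^2*h^2 + (8*ε^2*h^2)^2/2 + (8*ε^2*h^2)^3/6 + (8*ε^2*h^2)^4/24 + (8*ε^2*h^2)^5/120))) =O[𝓝[>] (0:ℝ)] fun h => h ^ 12 :=
      mulO (by fun_prop) e8
    refine (((T1.add T2).add T3).add T4).congr'
      (Filter.EventuallyEq.of_eq (funext fun h => by ring)) (Filter.EventuallyEq.of_eq rfl)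
  have hFB : (fun h : ℝ => Real.exp (ε^2*h^2)*(2*ε^2*h^2*((Real.exp (2*ε^2*h^2) + Real.exp (-(2*ε^2*h^2)))/2) - (Real.exp (2*ε^2*h^2) - Real.exp (-(2*ε^2*h^2)))/2) - (-1/4 - ε^2*h^2/4 - (ε^2*h^2)^2/40)*(4*ε^2*h^2 - (Real.exp (4*ε^2*h^2) - Real.exp (-(4*ε^2*h^2)))/2)) =O[𝓝[>] (0:ℝ)] fun h => h ^ 12 := by
    have T1 : (fun h : ℝ => (ε^12*(-28/45 + 97/225*(ε^2*h^2) + 1/5*(ε^2*h^2)^2 + 2/45*(ε^2*h^2)^3 + 2/225*(ε^2*h^2)^4)) * h^12) =O[𝓝[>] (0:ℝ)] fun h => h ^ 12 :=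
      mulO (by fun_prop) (isBigO_refl _ _)
    have T2 : (fun h : ℝ => (2*(ε^2*h^2)*((Real.exp (2*ε^2*h^2) + Real.exp (-(2*ε^2*h^2)))/2) - (Real.exp (2*ε^2*h^2) - Real.exp (-(2*ε^2*h^2)))/2) * (Real.exp (ε^2*h^2) - (1 + ε^2*h^2 + (ε^2*h^2)^2/2 + (ε^2*h^2)^3/6 + (ε^2*h^2)^4/24 + (ε^2*h^2)^5/120))) =O[𝓝[>] (0:ℝ)] fun h => h ^ 12 :=
      mulO (by fun_prop) e1
    have T3 : (fun h : ℝ => ((1 + ε^2*h^2 + (ε^2*h^2)^2/2 + (ε^2*h^2)^3/6 + (ε^2*h^2)^4/24 + (ε^2*h^2)^5/120)*(ε^2*h^2 - 1/2)) * (Real.exp (2*ε^2*h^2) - (1 + 2*ε^2*h^2 + (2*ε^2*h^2)^2/2 + (2*ε^2*h^2)^3/6 + (2*ε^2*h^2)^4/24 + (2*ε^2*h^2)^5/120))) =O[𝓝[>] (0:ℝ)] fun h => h ^ 12 :=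
      mulO (by fun_prop) e2
    have T4 : (fun h : ℝ => ((1 + ε^2*h^2 + (ε^2*h^2)^2/2 + (ε^2*h^2)^3/6 + (ε^2*h^2)^4/24 + (ε^2*h^2)^5/120)*(ε^2*h^2 + 1/2)) * (Real.exp (-(2*ε^2*h^2)) - (1 + -(2*ε^2*h^2) + (-(2*ε^2*h^2))^2/2 + (-(2*ε^2*h^2))^3/6 + (-(2*ε^2*h^2))^4/24 + (-(2*ε^2*h^2))^5/120))) =O[𝓝[>] (0:ℝ)] fun h => h ^ 12 :=
      mulO (by fun_prop) e2n
    have T5 : (fun h : ℝ => ((-1/4 - ε^2*h^2/4 - (ε^2*h^2)^2/40)/2) * (Real.exp (4*ε^2*h^2) - (1 + 4*ε^2*h^2 + (4*ε^2*h^2)^2/2 + (4*ε^2*h^2)^3/6 + (4*ε^2*h^2)^4/24 + (4*ε^2*h^2)^5/120))) =O[𝓝[>] (0:ℝ)] fun h => h ^ 12 :=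
      mulO (by fun_prop) e4
    have T6 : (fun h : ℝ => (-(-1/4 - ε^2*h^2/4 - (ε^2*h^2)^2/40)/2) * (Real.exp (-(4*ε^2*h^2)) - (1 + -(4*ε^2*h^2) + (-(4*ε^2*h^2))^2/2 + (-(4*ε^2*h^2))^3/6 + (-(4*ε^2*h^2))^4/24 + (-(4*ε^2*h^2))^5/120))) =O[𝓝[>] (0:ℝ)] fun h => h ^ 12 :=
      mulO (by fun_prop) f4n6
    refine ((((T1.add T2).add T3).add T4).add T5).add T6 |>.congr'
      (Filter.EventuallyEq.of_eq (funext fun h => by ring)) (Filter.EventuallyEq.of_eq rfl)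
  -- A and B expansions
  have hαP : (fun h : ℝ => (2*ε^2*h*Real.exp (3*ε^2*h^2)*(Real.exp (4*ε^2*h^2) - 1 - 4*ε^2*h^2) / (Real.exp (8*ε^2*h^2) - 1 - 8*ε^2*h^2*Real.exp (4*ε^2*h^2))) * h - (3/4 + ε^2*h^2/4 - 9*(ε^2*h^2)^2/40)) =O[𝓝[>] (0:ℝ)] fun h => h ^ 6 := by
    refine (quotO hcA hFA htDA).congr' ?_ (Filter.EventuallyEq.of_eq rfl)
    filter_upwards [htDA.eventually_ne hcA, h_pos_ne] with h hne h0
    have hDAne : ((Real.exp (8*ε^2*h^2) - 1 - 8*ε^2*h^2*Real.exp (4*ε^2*h^2)) : ℝ) ≠ 0 := by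
      intro hz; exact hne (by rw [hz]; simp)
    rw [sub_div, mul_div_assoc (a := (3/4 + ε^2*h^2/4 - 9*(ε^2*h^2)^2/40)), div_self hDAne,
      mul_one, div_mul_eq_mul_div]
  have hβP : (fun h : ℝ => (Real.exp (ε^2*h^2)*(2*ε^2*h^2*((Real.exp (2*ε^2*h^2) + Real.exp (-(2*ε^2*h^2)))/2) - (Real.exp (2*ε^2*h^2) - Real.exp (-(2*ε^2*h^2)))/2) / (4*ε^2*h^2 - (Real.exp (4*ε^2*h^2) - Real.exp (-(4*ε^2*h^2)))/2)) - (-1/4 - ε^2*h^2/4 - (ε^2*h^2)^2/40)) =O[𝓝[>] (0:ℝ)] fun h => h ^ 6 := by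
    refine (quotO hcB hFB htDB).congr' ?_ (Filter.EventuallyEq.of_eq rfl)
    filter_upwards [htDB.eventually_ne hcB, h_pos_ne] with h hne h0
    have hDBne : ((4*ε^2*h^2 - (Real.exp (4*ε^2*h^2) - Real.exp (-(4*ε^2*h^2)))/2) : ℝ) ≠ 0 := by
      intro hz; exact hne (by rw [hz]; simp)
    rw [sub_div, mul_div_assoc (a := (-1/4 - ε^2*h^2/4 - (ε^2*h^2)^2/40)), div_self hDBne,
      mul_one]
  have hα4 : (fun h : ℝ => (2*ε^2*h*Real.exp (3*ε^2*h^2)*(Real.exp (4*ε^2*h^2) - 1 - 4*ε^2*h^2) / (Real.exp (8*ε^2*h^2) - 1 - 8*ε^2*h^2*Real.exp (4*ε^2*h^2))) * h - (3/4 + ε^2*h^2/4 - 9*(ε^2*h^2)^2/40)) =o[𝓝[>] (0:ℝ)] fun h => h ^ 4 :=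
    hαP.trans_isLittleO (hpow_littleO (by norm_num))
  have hβ4 : (fun h : ℝ => (Real.exp (ε^2*h^2)*(2*ε^2*h^2*((Real.exp (2*ε^2*h^2) + Real.exp (-(2*ε^2*h^2)))/2) - (Real.exp (2*ε^2*h^2) - Real.exp (-(2*ε^2*h^2)))/2) / (4*ε^2*h^2 - (Real.exp (4*ε^2*h^2) - Real.exp (-(4*ε^2*h^2)))/2)) - (-1/4 - ε^2*h^2/4 - (ε^2*h^2)^2/40)) =o[𝓝[>] (0:ℝ)] fun h => h ^ 4 :=
    hβP.trans_isLittleO (hpow_littleO (by norm_num))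
  -- Taylor expansions of u
  have hsx : x₀ ∈ interior s := mem_interior_iff_mem_nhds.mpr hs
  have hu5 : ContDiffOn ℝ ((5:ℕ) : ℕ∞) u (interior s) := by
    exact_mod_cast hu.mono interior_subset
  have hu4 : ContDiffOn ℝ ((4:ℕ) : ℕ∞) (deriv u) (interior s) := by
    have := (hu.mono interior_subset).deriv_of_isOpen isOpen_interior
      (m := ((4:ℕ) : ℕ∞)) (by exact_mod_cast le_refl 5)
    exact_mod_cast this
  have hneg : Filter.Tendsto (fun h : ℝ => -h) (𝓝 (0:ℝ)) (𝓝 (0:ℝ)) := by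
    simpa using (continuous_neg : Continuous fun x : ℝ => -x).tendsto (0:ℝ)
  have hp5 := taylor_peano 5 u x₀ (interior s) isOpen_interior hsx hu5
  have hp4 := taylor_peano 4 (deriv u) x₀ (interior s) isOpen_interior hsx hu4
  have hOneg5 : ((fun h : ℝ => h ^ 5) ∘ fun h : ℝ => -h) =O[𝓝 (0:ℝ)] fun h => h ^ 5 := by
    rw [Asymptotics.isBigO_iff]
    exact ⟨1, by filter_upwards with h; simp [Function.comp, Real.norm_eq_abs, abs_pow]⟩
  have hOneg4 : ((fun h : ℝ => h ^ 4) ∘ fun h : ℝ => -h) =O[𝓝 (0:ℝ)] fun h => h ^ 4 := by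
    rw [Asymptotics.isBigO_iff]
    exact ⟨1, by filter_upwards with h; simp [Function.comp, Real.norm_eq_abs, abs_pow]⟩
  have hp5m := (hp5.comp_tendsto hneg).trans_isBigO hOneg5
  have hp4m := (hp4.comp_tendsto hneg).trans_isBigO hOneg4
  have h2d : iteratedDeriv 2 (deriv u) x₀ = iteratedDeriv 3 u x₀ := by
    rw [← iteratedDeriv_succ']
  have h4d : iteratedDeriv 4 (deriv u) x₀ = iteratedDeriv 5 u x₀ := by
    rw [← iteratedDeriv_succ']
  have h1d : iteratedDeriv 1 u x₀ = deriv u x₀ := by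
    rw [iteratedDeriv_one]
  have hD : (fun h : ℝ => (u (x₀ + h) - u (x₀ - h)) - (2*(deriv u x₀)*h + (iteratedDeriv 3 u x₀)*h^3/3
      + (iteratedDeriv 5 u x₀)*h^5/60)) =o[𝓝 (0:ℝ)] fun h => h ^ 5 := by
    refine (hp5.sub hp5m).congr'
      (Filter.EventuallyEq.of_eq (funext fun h => ?_)) (Filter.EventuallyEq.of_eq rfl)
    simp only [Function.comp_apply, Finset.sum_range_succ, Finset.sum_range_zero,
      Nat.factorial, h1d]
    rw [show x₀ + -h = x₀ - h from by ring]
    push_cast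
    ring
  have hσ0 : (fun h : ℝ => (deriv u (x₀ - h) + deriv u (x₀ + h)) - (2*(deriv u x₀) + (iteratedDeriv 3 u x₀)*h^2 + (iteratedDeriv 5 u x₀)*h^4/12))
      =o[𝓝 (0:ℝ)] fun h => h ^ 4 := by
    refine (hp4.add hp4m).congr'
      (Filter.EventuallyEq.of_eq (funext fun h => ?_)) (Filter.EventuallyEq.of_eq rfl)
    simp only [Function.comp_apply, Finset.sum_range_succ, Finset.sum_range_zero,
      Nat.factorial, iteratedDeriv_zero, h2d, h4d]
    rw [show x₀ + -h = x₀ - h from by ring]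
    push_cast
    ring
  have hσ : (fun h : ℝ => (deriv u (x₀ - h) + deriv u (x₀ + h)) - (2*(deriv u x₀) + (iteratedDeriv 3 u x₀)*h^2 + (iteratedDeriv 5 u x₀)*h^4/12)) =o[𝓝[>] (0:ℝ)] fun h => h ^ 4 := by
    refine (hσ0.mono nhdsWithin_le_nhds).congr'
      (Filter.EventuallyEq.of_eq (funext fun h => by ring)) (Filter.EventuallyEq.of_eq rfl)
  have hδ : (fun h : ℝ => (u (x₀ + h) - u (x₀ - h))/h - (2*(deriv u x₀) + (iteratedDeriv 3 u x₀)*h^2/3 + (iteratedDeriv 5 u x₀)*h^4/60)) =o[𝓝[>] (0:ℝ)] fun h => h ^ 4 := by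
    have hD' := (hD.mono nhdsWithin_le_nhds).mul_isBigO
      (isBigO_refl (fun h : ℝ => h⁻¹) (𝓝[>] (0:ℝ)))
    refine hD'.congr' ?_ ?_
    · filter_upwards [h_pos_ne] with h h0
      field_simp
    · filter_upwards [h_pos_ne] with h h0
      field_simp
  -- boundedness facts
  have hδO1 : (fun h : ℝ => (u (x₀ + h) - u (x₀ - h))/h) =O[𝓝[>] (0:ℝ)] (fun _ => (1:ℝ)) := by
    have := (hδ.isBigO.trans (hpow_O1 4)).add (cO1 (f := fun h : ℝ => (2*(deriv u x₀) + (iteratedDeriv 3 u x₀)*h^2/3 + (iteratedDeriv 5 u x₀)*h^4/60)) (by fun_prop))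
    refine this.congr' (Filter.EventuallyEq.of_eq (funext fun h => by ring))
      (Filter.EventuallyEq.of_eq (funext fun h => by norm_num))
  have hσO1 : (fun h : ℝ => (deriv u (x₀ - h) + deriv u (x₀ + h))) =O[𝓝[>] (0:ℝ)] (fun _ => (1:ℝ)) := by
    have := (hσ.isBigO.trans (hpow_O1 4)).add (cO1 (f := fun h : ℝ => (2*(deriv u x₀) + (iteratedDeriv 3 u x₀)*h^2 + (iteratedDeriv 5 u x₀)*h^4/12)) (by fun_prop))
    refine this.congr' (Filter.EventuallyEq.of_eq (funext fun h => by ring))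
      (Filter.EventuallyEq.of_eq (funext fun h => by norm_num))
  -- the main combination
  have o1 : (fun h : ℝ => ((2*ε^2*h*Real.exp (3*ε^2*h^2)*(Real.exp (4*ε^2*h^2) - 1 - 4*ε^2*h^2) / (Real.exp (8*ε^2*h^2) - 1 - 8*ε^2*h^2*Real.exp (4*ε^2*h^2))) * h - (3/4 + ε^2*h^2/4 - 9*(ε^2*h^2)^2/40)) * ((u (x₀ + h) - u (x₀ - h))/h)) =o[𝓝[>] (0:ℝ)] fun h => h ^ 4 := by
    have := hα4.mul_isBigO hδO1
    refine this.congr' (Filter.EventuallyEq.of_eq rfl)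
      (Filter.EventuallyEq.of_eq (funext fun h => by ring))
  have o2 : (fun h : ℝ => (3/4 + ε^2*h^2/4 - 9*(ε^2*h^2)^2/40) * ((u (x₀ + h) - u (x₀ - h))/h - (2*(deriv u x₀) + (iteratedDeriv 3 u x₀)*h^2/3 + (iteratedDeriv 5 u x₀)*h^4/60))) =o[𝓝[>] (0:ℝ)] fun h => h ^ 4 := by
    have := (cO1 (f := fun h : ℝ => (3/4 + ε^2*h^2/4 - 9*(ε^2*h^2)^2/40)) (by fun_prop)).mul_isLittleO hδ
    refine this.congr' (Filter.EventuallyEq.of_eq rfl)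
      (Filter.EventuallyEq.of_eq (funext fun h => by ring))
  have o3 : (fun h : ℝ => ((Real.exp (ε^2*h^2)*(2*ε^2*h^2*((Real.exp (2*ε^2*h^2) + Real.exp (-(2*ε^2*h^2)))/2) - (Real.exp (2*ε^2*h^2) - Real.exp (-(2*ε^2*h^2)))/2) / (4*ε^2*h^2 - (Real.exp (4*ε^2*h^2) - Real.exp (-(4*ε^2*h^2)))/2)) - (-1/4 - ε^2*h^2/4 - (ε^2*h^2)^2/40)) * (deriv u (x₀ - h) + deriv u (x₀ + h))) =o[𝓝[>] (0:ℝ)] fun h => h ^ 4 := by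
    have := hβ4.mul_isBigO hσO1
    refine this.congr' (Filter.EventuallyEq.of_eq rfl)
      (Filter.EventuallyEq.of_eq (funext fun h => by ring))
  have o4 : (fun h : ℝ => (-1/4 - ε^2*h^2/4 - (ε^2*h^2)^2/40) * ((deriv u (x₀ - h) + deriv u (x₀ + h)) - (2*(deriv u x₀) + (iteratedDeriv 3 u x₀)*h^2 + (iteratedDeriv 5 u x₀)*h^4/12))) =o[𝓝[>] (0:ℝ)] fun h => h ^ 4 := by
    have := (cO1 (f := fun h : ℝ => (-1/4 - ε^2*h^2/4 - (ε^2*h^2)^2/40)) (by fun_prop)).mul_isLittleO hσ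
    refine this.congr' (Filter.EventuallyEq.of_eq rfl)
      (Filter.EventuallyEq.of_eq (funext fun h => by ring))
  have o5 : (fun h : ℝ => h^6 * (-(ε^2*(iteratedDeriv 5 u x₀))/60 - ε^4*(iteratedDeriv 3 u x₀)/10 - 7*ε^4*(iteratedDeriv 5 u x₀)*h^2/1200)) =o[𝓝[>] (0:ℝ)] fun h => h ^ 4 := by
    have h1 : (fun h : ℝ => h^6 * (-(ε^2*(iteratedDeriv 5 u x₀))/60 - ε^4*(iteratedDeriv 3 u x₀)/10 - 7*ε^4*(iteratedDeriv 5 u x₀)*h^2/1200)) =O[𝓝[>] (0:ℝ)] fun h => h ^ 6 := by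
      have := mulO (n := 6) (f := fun h : ℝ => (-(ε^2*(iteratedDeriv 5 u x₀))/60 - ε^4*(iteratedDeriv 3 u x₀)/10 - 7*ε^4*(iteratedDeriv 5 u x₀)*h^2/1200)) (by fun_prop) (isBigO_refl _ _)
      refine this.congr' (Filter.EventuallyEq.of_eq (funext fun h => by ring))
        (Filter.EventuallyEq.of_eq rfl)
    exact h1.trans_isLittleO (hpow_littleO (by norm_num))
  have main : (fun h : ℝ => ((2*ε^2*h*Real.exp (3*ε^2*h^2)*(Real.exp (4*ε^2*h^2) - 1 - 4*ε^2*h^2) / (Real.exp (8*ε^2*h^2) - 1 - 8*ε^2*h^2*Real.exp (4*ε^2*h^2))) * h) * ((u (x₀ + h) - u (x₀ - h))/h) + (Real.exp (ε^2*h^2)*(2*ε^2*h^2*((Real.exp (2*ε^2*h^2) + Real.exp (-(2*ε^2*h^2)))/2) - (Real.exp (2*ε^2*h^2) - Real.exp (-(2*ε^2*h^2)))/2) / (4*ε^2*h^2 - (Real.exp (4*ε^2*h^2) - Real.exp (-(4*ε^2*h^2)))/2)) * (deriv u (x₀ - h) + deriv u (x₀ + h))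
      - deriv u x₀ - (-(h^4/120) * (60*ε^4*(deriv u x₀) + 20*ε^2*(iteratedDeriv 3 u x₀) + iteratedDeriv 5 u x₀))) =o[𝓝[>] (0:ℝ)] fun h => h ^ 4 := by
    refine ((((o1.add o2).add o3).add o4).add o5).congr'
      (Filter.EventuallyEq.of_eq (funext fun h => by ring)) (Filter.EventuallyEq.of_eq rfl)
  refine main.congr' ?_ (Filter.EventuallyEq.of_eq rfl)
  filter_upwards [h_pos_ne] with h h0
  simp only [Real.cosh_eq, Real.sinh_eq]
  rw [mul_assoc, mul_comm h, div_mul_cancel₀ _ h0]
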